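/- For n ∈ ℕ and indices i ≤ j (with i, j in the appropriate ranges), consider the cosimplicial identity σʲ ∘ σⁱ = σⁱ ∘ σʲ⁺¹ as a commutative square of maps of types Fin(n+3) → Fin(n+2) → Fin(n+1), where σᵏ : Fin(m+2) → Fin(m+1) is the unique order-preserving surjection taking the value k twice. This commutative square is a pushout square in the category of types, but (in general, e.g., for n = 0 and i = j = 0) it is not a pullback square. -/

import Mathlib

open CategoryTheory

lemma predAbove_val' {m : ℕ} (p : Fin m) (x : Fin (m + 1)) :
    ((p.predAbove x : Fin m) : ℕ) = if (p : ℕ) < (x : ℕ) then (x : ℕ) - 1 else (x : ℕ) := by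
  unfold Fin.predAbove
  split <;> rename_i h <;>
    simp only [Fin.lt_def, Fin.coe_castSucc] at h <;>
    simp only [Fin.coe_pred, Fin.coe_castPred] <;>
    split <;> omega

lemma succAbove_val' {m : ℕ} (p : Fin (m + 1)) (x : Fin m) :
    ((p.succAbove x : Fin (m + 1)) : ℕ) = if (x : ℕ) < (p : ℕ) then (x : ℕ) else (x : ℕ) + 1 := by
  unfold Fin.succAbove
  split <;> rename_i h <;>
    simp only [Fin.lt_def, Fin.coe_castSucc] at h <;>
    simp only [Fin.coe_castSucc, Fin.val_succ] <;>
    split <;> omega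

open CategoryTheory in
/-- The cosimplicial identity square `σ_j ∘ σ_i = σ_i ∘ σ_{j+1}` (for
`i ≤ j`), formed by the codegeneracy maps `σ_k = Fin.predAbove k`, is a pushout square
in the category of types, but in general (e.g. `n = 0`, `i = j = 0`) not a pullback. -/
theorem sigma_sigma_square_isPushout_not_isPullback :
    (∀ (n : ℕ) (i j : Fin (n + 1)), i ≤ j →
      IsPushout (C := Type)
        (TypeCat.ofHom (Fin.predAbove i.castSucc : Fin (n + 3) → Fin (n + 2)))
        (TypeCat.ofHom (Fin.predAbove j.succ : Fin (n + 3) → Fin (n + 2)))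
        (TypeCat.ofHom (Fin.predAbove j : Fin (n + 2) → Fin (n + 1)))
        (TypeCat.ofHom (Fin.predAbove i : Fin (n + 2) → Fin (n + 1)))) ∧
    ¬ IsPullback (C := Type)
        (TypeCat.ofHom (Fin.predAbove (Fin.castSucc (0 : Fin 1)) : Fin 3 → Fin 2))
        (TypeCat.ofHom (Fin.predAbove (Fin.succ (0 : Fin 1)) : Fin 3 → Fin 2))
        (TypeCat.ofHom (Fin.predAbove (0 : Fin 1) : Fin 2 → Fin 1))
        (TypeCat.ofHom (Fin.predAbove (0 : Fin 1) : Fin 2 → Fin 1)) := by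
  constructor
  · intro n i j hij
    have hij' : (i : ℕ) ≤ (j : ℕ) := hij
    have hjn : (j : ℕ) ≤ n := Nat.lt_succ_iff.mp j.isLt
    refine IsPushout.of_isColimit' ⟨?_⟩ ?_
    · refine ConcreteCategory.hom_ext _ _ fun x => ?_
      simp only [types_comp_apply, TypeCat.ofHom_apply]
      apply Fin.ext
      simp only [predAbove_val', Fin.coe_castSucc, Fin.val_succ]
      have := x.isLt
      split_ifs <;> omega
    apply Limits.PushoutCocone.IsColimit.mk
    case desc =>
      intro s
      exact TypeCat.ofHom fun d => s.inl ((j.succ).succAbove d)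
    case fac_left =>
      intro s
      ext b
      simp only [types_comp_apply]
      show s.inl ((j.succ).succAbove (j.predAbove b)) = s.inl b
      by_cases hb : (b : ℕ) = (j : ℕ) + 1
      · have h1 : (j.succ).succAbove (j.predAbove b) = j.castSucc := by
          apply Fin.ext
          simp only [succAbove_val', predAbove_val', Fin.val_succ, Fin.coe_castSucc]
          split_ifs <;> omega
        rw [h1]
        have hc' := fun x => types_congr_hom s.condition x
        simp only [types_comp_apply, TypeCat.ofHom_apply] at hc'
        have e1 := hc' ((j.succ).castSucc)
        have e2 := hc' ((j.succ).succ)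
        have f1 : (i.castSucc).predAbove ((j.succ).castSucc) = j.castSucc := by
          apply Fin.ext
          simp only [predAbove_val', Fin.coe_castSucc, Fin.val_succ]
          split_ifs <;> omega
        have f2 : (i.castSucc).predAbove ((j.succ).succ) = j.succ := by
          apply Fin.ext
          simp only [predAbove_val', Fin.coe_castSucc, Fin.val_succ]
          split_ifs <;> omega
        have g12 : (j.succ).predAbove ((j.succ).castSucc) =
            (j.succ).predAbove ((j.succ).succ) := by
          apply Fin.ext
          simp only [predAbove_val', Fin.coe_castSucc, Fin.val_succ]
          split_ifs <;> omega
        rw [f1] at e1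
        rw [f2] at e2
        have hbe : b = j.succ := Fin.ext (by simpa using hb)
        rw [e1, g12, ← e2, hbe]
      · have hX : (j.succ).succAbove (j.predAbove b) = b := by
          apply Fin.ext
          simp only [succAbove_val', predAbove_val', Fin.val_succ]
          have := b.isLt
          split_ifs <;> omega
        rw [hX]
    case fac_right =>
      intro s
      ext c
      simp only [types_comp_apply]
      show s.inl ((j.succ).succAbove (i.predAbove c)) = s.inr c
      have hc' := fun x => types_congr_hom s.condition x
      simp only [types_comp_apply, TypeCat.ofHom_apply] at hc'
      have e := hc' ((j.succ.succ).succAbove c)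
      have f1 : (i.castSucc).predAbove ((j.succ.succ).succAbove c) =
          (j.succ).succAbove (i.predAbove c) := by
        apply Fin.ext
        simp only [predAbove_val', succAbove_val', Fin.coe_castSucc, Fin.val_succ]
        have := c.isLt
        split_ifs <;> omega
      have f2 : (j.succ).predAbove ((j.succ.succ).succAbove c) = c := by
        apply Fin.ext
        simp only [predAbove_val', succAbove_val', Fin.val_succ]
        have := c.isLt
        split_ifs <;> omega
      rw [f1, f2] at e
      exact e
    case uniq =>
      intro s m hl hr
      ext d
      have hsec : j.predAbove ((j.succ).succAbove d) = d := by
        apply Fin.ext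
        simp only [predAbove_val', succAbove_val', Fin.val_succ]
        have := d.isLt
        split_ifs <;> omega
      have := types_congr_hom hl ((j.succ).succAbove d)
      simp only [types_comp_apply] at this
      calc m d = m (j.predAbove ((j.succ).succAbove d)) := by rw [hsec]
        _ = s.inl ((j.succ).succAbove d) := this
  · intro hpb
    have h1 := types_congr_hom (hpb.lift_fst (W := PUnit.{1}) (TypeCat.ofHom fun _ => (1 : Fin 2))
      (TypeCat.ofHom fun _ => (0 : Fin 2)) (ConcreteCategory.hom_ext _ _ fun x => Subsingleton.elim _ _)) PUnit.unit
    have h2 := types_congr_hom (hpb.lift_snd (W := PUnit.{1}) (TypeCat.ofHom fun _ => (1 : Fin 2))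
      (TypeCat.ofHom fun _ => (0 : Fin 2)) (ConcreteCategory.hom_ext _ _ fun x => Subsingleton.elim _ _)) PUnit.unit
    simp only [types_comp_apply, TypeCat.ofHom_apply] at h1 h2
    set y := hpb.lift _ _ _ PUnit.unit with hy
    have e1 := congrArg Fin.val h1
    have e2 := congrArg Fin.val h2
    rw [predAbove_val'] at e1 e2
    simp only [Fin.coe_castSucc, Fin.val_succ, Fin.val_zero, Fin.val_one] at e1 e2
    have := y.isLt
    split_ifs at e1 e2 <;> omega
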